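/- Let (M, d) be a metric space, p ≥ 1, π ∈ Δ^{n-1}, and let A, B ∈ M_n(ℝ) be π-stationary row-stochastic matrices. For x = (x_1,…,x_n) ∈ M^n with not all components equal, define the nonlinear Rayleigh quotient R(x; A, d^p) = (Σ_{i,j} π_i a_{ij} d(x_i,x_j)^p) / (Σ_{i,j} π_i π_j d(x_i,x_j)^p). Then R(x; AB, d^p)^{1/p} ≤ R(x; A, d^p)^{1/p} + R(x; B, d^p)^{1/p}. -/

import Mathlib

/-- The nonlinear Rayleigh quotient of a point configuration `x` in a metric
space `M` with respect to a stochastic matrix `A`, weights `w` and power `p`. -/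
noncomputable def rayleigh {M : Type*} [MetricSpace M] {n : ℕ} (w : Fin n → ℝ)
    (A : Matrix (Fin n) (Fin n) ℝ) (x : Fin n → M) (p : ℝ) : ℝ :=
  (∑ i, ∑ j, w i * A i j * dist (x i) (x j) ^ p) /
    (∑ i, ∑ j, w i * w j * dist (x i) (x j) ^ p)

/-- Subadditivity of the `p`-th root of nonlinear Rayleigh quotients under
matrix products: R(x; AB, d^p)^{1/p} ≤ R(x; A, d^p)^{1/p} + R(x; B, d^p)^{1/p}. -/
theorem rayleigh_mul_le {M : Type*} [MetricSpace M] (n : ℕ) (p : ℝ) (hp : 1 ≤ p)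
    (w : Fin n → ℝ) (hwpos : ∀ i, 0 < w i) (hwsum : ∑ i, w i = 1)
    (A B : Matrix (Fin n) (Fin n) ℝ)
    (hA0 : ∀ i j, 0 ≤ A i j) (hArow : ∀ i, ∑ j, A i j = 1)
    (hAstat : ∀ j, ∑ i, w i * A i j = w j)
    (hB0 : ∀ i j, 0 ≤ B i j) (hBrow : ∀ i, ∑ j, B i j = 1)
    (hBstat : ∀ j, ∑ i, w i * B i j = w j)
    (x : Fin n → M) (hx : ∃ i j, x i ≠ x j) :
    rayleigh w (A * B) x p ^ (1 / p) ≤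
      rayleigh w A x p ^ (1 / p) + rayleigh w B x p ^ (1 / p) := by
  have hp0 : 0 < p := lt_of_lt_of_le one_pos hp
  -- the denominator is positive
  set D := ∑ i, ∑ j, w i * w j * dist (x i) (x j) ^ p with hDdef
  have hterm_nonneg : ∀ i j : Fin n, 0 ≤ w i * w j * dist (x i) (x j) ^ p := fun i j =>
    mul_nonneg (mul_nonneg (hwpos i).le (hwpos j).le) (Real.rpow_nonneg dist_nonneg p)
  have hDpos : 0 < D := by
    obtain ⟨i, j, hij⟩ := hx
    have hdij : 0 < dist (x i) (x j) := dist_pos.mpr hij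
    refine Finset.sum_pos' (fun i _ => Finset.sum_nonneg fun j _ => hterm_nonneg i j)
      ⟨i, Finset.mem_univ i, Finset.sum_pos' (fun j _ => hterm_nonneg i j)
        ⟨j, Finset.mem_univ j, ?_⟩⟩
    exact mul_pos (mul_pos (hwpos i) (hwpos j)) (Real.rpow_pos_of_pos hdij p)
  -- numerators
  set NA := ∑ i, ∑ j, w i * A i j * dist (x i) (x j) ^ p with hNA
  set NB := ∑ i, ∑ j, w i * B i j * dist (x i) (x j) ^ p with hNB
  set NC := ∑ i, ∑ j, w i * (A * B) i j * dist (x i) (x j) ^ p with hNC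
  have hNAnn : 0 ≤ NA := Finset.sum_nonneg fun i _ => Finset.sum_nonneg fun j _ =>
    mul_nonneg (mul_nonneg (hwpos i).le (hA0 i j)) (Real.rpow_nonneg dist_nonneg p)
  have hNBnn : 0 ≤ NB := Finset.sum_nonneg fun i _ => Finset.sum_nonneg fun j _ =>
    mul_nonneg (mul_nonneg (hwpos i).le (hB0 i j)) (Real.rpow_nonneg dist_nonneg p)
  have hAB0 : ∀ i j, 0 ≤ (A * B) i j := fun i j => by
    rw [Matrix.mul_apply]
    exact Finset.sum_nonneg fun k _ => mul_nonneg (hA0 i k) (hB0 k j)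
  have hNCnn : 0 ≤ NC := Finset.sum_nonneg fun i _ => Finset.sum_nonneg fun j _ =>
    mul_nonneg (mul_nonneg (hwpos i).le (hAB0 i j)) (Real.rpow_nonneg dist_nonneg p)
  -- triple sum setup
  set c : Fin n × Fin n × Fin n → ℝ := fun t => w t.1 * A t.1 t.2.1 * B t.2.1 t.2.2 with hc
  have hcnn : ∀ t, 0 ≤ c t := fun t =>
    mul_nonneg (mul_nonneg (hwpos t.1).le (hA0 t.1 t.2.1)) (hB0 t.2.1 t.2.2)
  set f : Fin n × Fin n × Fin n → ℝ := fun t => c t ^ (1 / p) * dist (x t.1) (x t.2.1) with hf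
  set g : Fin n × Fin n × Fin n → ℝ := fun t => c t ^ (1 / p) * dist (x t.2.1) (x t.2.2) with hg
  have hcpow : ∀ t, (c t ^ (1 / p)) ^ p = c t := fun t => by
    rw [← Real.rpow_mul (hcnn t), one_div, inv_mul_cancel₀ hp0.ne', Real.rpow_one]
  have hmulpow : ∀ (t : Fin n × Fin n × Fin n) (d : ℝ), 0 ≤ d →
      (c t ^ (1 / p) * d) ^ p = c t * d ^ p := fun t d hd => by
    rw [Real.mul_rpow (Real.rpow_nonneg (hcnn t) _) hd, hcpow]
  -- sum of f^p equals NA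
  have hsumf : ∑ t : Fin n × Fin n × Fin n, f t ^ p = NA := by
    rw [hNA, Fintype.sum_prod_type]
    refine Finset.sum_congr rfl fun i _ => ?_
    rw [Fintype.sum_prod_type]
    refine Finset.sum_congr rfl fun j _ => ?_
    have h1 : ∀ k : Fin n, f (i, j, k) ^ p
        = (w i * A i j * dist (x i) (x j) ^ p) * B j k := fun k => by
      rw [hf]; dsimp only; rw [hmulpow _ _ dist_nonneg, hc]; dsimp only; ring
    simp_rw [h1]
    rw [← Finset.mul_sum, hBrow j, mul_one]
  -- sum of g^p equals NB
  have hsumg : ∑ t : Fin n × Fin n × Fin n, g t ^ p = NB := by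
    rw [hNB, Fintype.sum_prod_type]
    have h1 : ∀ t : Fin n × Fin n × Fin n, g t ^ p
        = (w t.1 * A t.1 t.2.1) * (B t.2.1 t.2.2 * dist (x t.2.1) (x t.2.2) ^ p) := fun t => by
      rw [hg]; dsimp only; rw [hmulpow _ _ dist_nonneg, hc]; dsimp only; ring
    simp_rw [h1]
    simp_rw [Fintype.sum_prod_type]
    rw [Finset.sum_comm]
    refine Finset.sum_congr rfl fun j _ => ?_
    rw [Finset.sum_comm]
    refine Finset.sum_congr rfl fun k _ => ?_
    rw [← Finset.sum_mul, hAstat j, ← mul_assoc]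
  -- NC is bounded by the sum of (f+g)^p
  have hsumfg : NC ≤ ∑ t : Fin n × Fin n × Fin n, (f t + g t) ^ p := by
    have hNCeq : NC = ∑ t : Fin n × Fin n × Fin n, c t * dist (x t.1) (x t.2.2) ^ p := by
      rw [hNC, Fintype.sum_prod_type]
      refine Finset.sum_congr rfl fun i _ => ?_
      rw [Fintype.sum_prod_type, Finset.sum_comm]
      refine Finset.sum_congr rfl fun k _ => ?_
      rw [Matrix.mul_apply, Finset.mul_sum, Finset.sum_mul]
      refine Finset.sum_congr rfl fun j _ => ?_
      rw [hc]; dsimp only; ring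
    rw [hNCeq]
    refine Finset.sum_le_sum fun t _ => ?_
    have hfg : f t + g t = c t ^ (1 / p) * (dist (x t.1) (x t.2.1) + dist (x t.2.1) (x t.2.2)) := by
      rw [hf, hg]; ring
    rw [hfg, hmulpow _ _ (add_nonneg dist_nonneg dist_nonneg)]
    refine mul_le_mul_of_nonneg_left ?_ (hcnn t)
    exact Real.rpow_le_rpow dist_nonneg (dist_triangle _ _ _) hp0.le
  -- Minkowski
  have hmink : NC ^ (1 / p) ≤ NA ^ (1 / p) + NB ^ (1 / p) := by
    calc NC ^ (1 / p) ≤ (∑ t : Fin n × Fin n × Fin n, (f t + g t) ^ p) ^ (1 / p) :=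
          Real.rpow_le_rpow hNCnn hsumfg (by positivity)
      _ ≤ (∑ t : Fin n × Fin n × Fin n, f t ^ p) ^ (1 / p)
            + (∑ t : Fin n × Fin n × Fin n, g t ^ p) ^ (1 / p) :=
          Real.Lp_add_le_of_nonneg Finset.univ hp (fun t _ =>
            mul_nonneg (Real.rpow_nonneg (hcnn t) _) dist_nonneg) (fun t _ =>
            mul_nonneg (Real.rpow_nonneg (hcnn t) _) dist_nonneg)
      _ = NA ^ (1 / p) + NB ^ (1 / p) := by rw [hsumf, hsumg]
  -- conclude
  have hray : ∀ (C : Matrix (Fin n) (Fin n) ℝ),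
      rayleigh w C x p = (∑ i, ∑ j, w i * C i j * dist (x i) (x j) ^ p) / D := fun C => rfl
  rw [hray, hray, hray, ← hNA, ← hNB, ← hNC,
    Real.div_rpow hNCnn hDpos.le, Real.div_rpow hNAnn hDpos.le, Real.div_rpow hNBnn hDpos.le,
    ← add_div, div_le_div_iff_of_pos_right (Real.rpow_pos_of_pos hDpos _)]
  exact hmink
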